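/- Let P ⊆ Im(O') be a spacelike cross-closed 3-plane, W ⊆ P a 2-dimensional subspace, and (u,v) a q-orthonormal basis of W (q(u)=q(v)=1, ⟨u,v⟩=0). Then: (i) for every z ∈ P⊥ with q(z) = −1, the subspace ω_z := span{u+z, v+(uv)z} (octonion products) is an annihilator photon whose orthogonal projection to P equals W; (ii) conversely, every annihilator photon ω whose orthogonal projection to P equals W satisfies ω = ω_z for a unique z ∈ P⊥ with q(z) = −1. -/

import Mathlib

noncomputable section

open Quaternion

/-- The split octonions `𝕆' = ℍ × ℍ`. -/
abbrev SplitOct : Type := ℍ[ℝ] × ℍ[ℝ]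

namespace SplitOct

/-- Split octonion multiplication `(a,b)(c,d) = (ac + d̄b, da + bc̄)`. -/
def mul (x y : SplitOct) : SplitOct :=
  (x.1 * y.1 + star y.2 * x.2, y.2 * x.1 + x.2 * star y.1)

/-- Split octonion conjugation `(a,b)* = (ā, −b)`. -/
def conj (x : SplitOct) : SplitOct := (star x.1, -x.2)

lemma conj_add (x y : SplitOct) : conj (x + y) = conj x + conj y := by
  simp only [conj, Prod.fst_add, Prod.snd_add, star_add, Prod.mk_add_mk, neg_add]

lemma conj_neg (x : SplitOct) : conj (-x) = -conj x := by
  simp [conj, Prod.ext_iff]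

lemma conj_sub (x y : SplitOct) : conj (x - y) = conj x - conj y := by
  rw [sub_eq_add_neg, conj_add, conj_neg, ← sub_eq_add_neg]

lemma conj_smul (r : ℝ) (x : SplitOct) : conj (r • x) = r • conj x := by
  simp [conj, Prod.ext_iff]

lemma conj_conj (x : SplitOct) : conj (conj x) = x := by
  simp [conj]

lemma conj_zero : conj 0 = 0 := by
  simp [conj, Prod.ext_iff]

/-- The imaginary split octonions `Im 𝕆' = {x | x* = −x}`. -/
def Im : Submodule ℝ SplitOct where
  carrier := {x | conj x = -x}
  add_mem' := by
    intro a b ha hb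
    simp only [Set.mem_setOf_eq] at ha hb ⊢
    rw [conj_add, ha, hb, neg_add]
  zero_mem' := by
    simp only [Set.mem_setOf_eq, conj_zero, neg_zero]
  smul_mem' := by
    intro r a ha
    simp only [Set.mem_setOf_eq] at ha ⊢
    rw [conj_smul, ha, smul_neg]

lemma mem_Im_iff {x : SplitOct} : x ∈ Im ↔ conj x = -x := Iff.rfl

/-- `q x = x·x*`, read as a real number (its values lie in `ℝ·1 ≅ ℝ`). -/
def q (x : SplitOct) : ℝ := (mul x (conj x)).1.re

/-- The polarization `⟨x,y⟩` of the quadratic form `q`. -/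
def polar (x y : SplitOct) : ℝ := (q (x + y) - q x - q y) / 2

/-- The cross product `x × y = (xy − (xy)*)/2`. -/
def cross (x y : SplitOct) : SplitOct := (2 : ℝ)⁻¹ • (mul x y - conj (mul x y))

/-- The scalar triple product `Ω(u,v,w) = ⟨u×v, w⟩`. -/
def triple (u v w : SplitOct) : ℝ := polar (cross u v) w

lemma q_apply (x : SplitOct) : q x = normSq x.1 - normSq x.2 := by
  simp only [q, mul, conj, star_neg, neg_mul, Quaternion.self_mul_star, Quaternion.star_mul_self,
    Quaternion.re_add, Quaternion.re_neg, Quaternion.re_coe]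
  ring

lemma polar_apply (x y : SplitOct) :
    polar x y = (x.1 * star y.1).re - (x.2 * star y.2).re := by
  simp only [polar, q_apply, Prod.fst_add, Prod.snd_add, Quaternion.normSq_def',
    Quaternion.re_mul, Quaternion.re_add, Quaternion.imI_add, Quaternion.imJ_add,
    Quaternion.imK_add, Quaternion.re_star, Quaternion.imI_star, Quaternion.imJ_star,
    Quaternion.imK_star]
  ring

lemma polar_add_left (x x' y : SplitOct) : polar (x + x') y = polar x y + polar x' y := by
  simp only [polar_apply, Prod.fst_add, Prod.snd_add, add_mul, Quaternion.re_add]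
  ring

lemma polar_add_right (x y y' : SplitOct) : polar x (y + y') = polar x y + polar x y' := by
  simp only [polar_apply, Prod.fst_add, Prod.snd_add, star_add, mul_add, Quaternion.re_add]
  ring

lemma polar_smul_left (r : ℝ) (x y : SplitOct) : polar (r • x) y = r * polar x y := by
  simp only [polar_apply, Prod.smul_fst, Prod.smul_snd, smul_mul_assoc, Quaternion.re_smul,
    smul_eq_mul]
  ring

lemma polar_smul_right (r : ℝ) (x y : SplitOct) : polar x (r • y) = r * polar x y := by
  simp only [polar_apply, Prod.smul_fst, Prod.smul_snd, Quaternion.star_smul,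
    mul_smul_comm, Quaternion.re_smul, smul_eq_mul]
  ring

lemma polar_zero_left (y : SplitOct) : polar 0 y = 0 := by
  simp [polar_apply]

lemma polar_zero_right (x : SplitOct) : polar x 0 = 0 := by
  simp [polar_apply]

lemma mul_add_left (x x' y : SplitOct) : mul (x + x') y = mul x y + mul x' y := by
  simp only [mul, Prod.fst_add, Prod.snd_add, add_mul, mul_add, Prod.mk_add_mk, Prod.mk.injEq]
  constructor <;> abel

lemma mul_add_right (x y y' : SplitOct) : mul x (y + y') = mul x y + mul x y' := by
  simp only [mul, Prod.fst_add, Prod.snd_add, star_add, add_mul, mul_add, Prod.mk_add_mk,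
    Prod.mk.injEq]
  constructor <;> abel

lemma mul_smul_left (r : ℝ) (x y : SplitOct) : mul (r • x) y = r • mul x y := by
  simp only [mul, Prod.smul_fst, Prod.smul_snd, smul_mul_assoc, mul_smul_comm, Prod.smul_mk,
    smul_add]

lemma mul_smul_right (r : ℝ) (x y : SplitOct) : mul x (r • y) = r • mul x y := by
  simp only [mul, Prod.smul_fst, Prod.smul_snd, Quaternion.star_smul, smul_mul_assoc,
    mul_smul_comm, Prod.smul_mk, smul_add]

lemma mul_zero_left (y : SplitOct) : mul 0 y = 0 := by
  simp [mul, Prod.ext_iff]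

lemma mul_zero_right (x : SplitOct) : mul x 0 = 0 := by
  simp [mul, Prod.ext_iff]

lemma cross_add_left (x x' y : SplitOct) : cross (x + x') y = cross x y + cross x' y := by
  rw [cross, cross, cross, mul_add_left, conj_add]
  module

lemma cross_add_right (x y y' : SplitOct) : cross x (y + y') = cross x y + cross x y' := by
  rw [cross, cross, cross, mul_add_right, conj_add]
  module

lemma cross_smul_left (r : ℝ) (x y : SplitOct) : cross (r • x) y = r • cross x y := by
  rw [cross, cross, mul_smul_left, conj_smul]
  module

lemma cross_smul_right (r : ℝ) (x y : SplitOct) : cross x (r • y) = r • cross x y := by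
  rw [cross, cross, mul_smul_right, conj_smul]
  module

lemma cross_zero_left (y : SplitOct) : cross 0 y = 0 := by
  simp [cross, mul_zero_left, conj_zero]

lemma cross_zero_right (x : SplitOct) : cross x 0 = 0 := by
  simp [cross, mul_zero_right, conj_zero]

lemma cross_mem_Im (x y : SplitOct) : cross x y ∈ Im := by
  rw [mem_Im_iff, cross, conj_smul, conj_sub, conj_conj]
  module

lemma triple_add₁ (u u' v w : SplitOct) :
    triple (u + u') v w = triple u v w + triple u' v w := by
  rw [triple, triple, triple, cross_add_left, polar_add_left]

lemma triple_add₂ (u v v' w : SplitOct) :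
    triple u (v + v') w = triple u v w + triple u v' w := by
  rw [triple, triple, triple, cross_add_right, polar_add_left]

lemma triple_add₃ (u v w w' : SplitOct) :
    triple u v (w + w') = triple u v w + triple u v w' :=
  polar_add_right _ _ _

lemma triple_smul₁ (r : ℝ) (u v w : SplitOct) : triple (r • u) v w = r * triple u v w := by
  rw [triple, triple, cross_smul_left, polar_smul_left]

lemma triple_smul₂ (r : ℝ) (u v w : SplitOct) : triple u (r • v) w = r * triple u v w := by
  rw [triple, triple, cross_smul_right, polar_smul_left]

lemma triple_smul₃ (r : ℝ) (u v w : SplitOct) : triple u v (r • w) = r * triple u v w :=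
  polar_smul_right _ _ _

lemma triple_zero₁ (v w : SplitOct) : triple 0 v w = 0 := by
  rw [triple, cross_zero_left, polar_zero_left]

lemma triple_zero₂ (u w : SplitOct) : triple u 0 w = 0 := by
  rw [triple, cross_zero_right, polar_zero_left]

lemma triple_zero₃ (u v : SplitOct) : triple u v 0 = 0 :=
  polar_zero_right _

/-- The orthogonal complement of `P` inside the imaginary split octonions. -/
def orth (P : Submodule ℝ SplitOct) : Submodule ℝ SplitOct where
  carrier := {x | x ∈ Im ∧ ∀ y ∈ P, polar x y = 0}
  add_mem' := by
    rintro a b ⟨ha1, ha2⟩ ⟨hb1, hb2⟩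
    exact ⟨Im.add_mem ha1 hb1, fun y hy => by
      rw [polar_add_left, ha2 y hy, hb2 y hy, add_zero]⟩
  zero_mem' := ⟨Im.zero_mem, fun y _ => polar_zero_left y⟩
  smul_mem' := by
    rintro r a ⟨ha1, ha2⟩
    exact ⟨Im.smul_mem r ha1, fun y hy => by
      rw [polar_smul_left, ha2 y hy, mul_zero]⟩

/-- The annihilator `Ann x = {v ∈ Im 𝕆' | x × v = 0}`. -/
def Ann (x : SplitOct) : Submodule ℝ SplitOct where
  carrier := {v | v ∈ Im ∧ cross x v = 0}
  add_mem' := by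
    rintro a b ⟨ha1, ha2⟩ ⟨hb1, hb2⟩
    exact ⟨Im.add_mem ha1 hb1, by rw [cross_add_right, ha2, hb2, add_zero]⟩
  zero_mem' := ⟨Im.zero_mem, cross_zero_right x⟩
  smul_mem' := by
    rintro r a ⟨ha1, ha2⟩
    exact ⟨Im.smul_mem r ha1, by rw [cross_smul_right, ha2, smul_zero]⟩

/-- An isotropic line of `Im 𝕆'`. -/
def IsIsotropicLine (ℓ : Submodule ℝ SplitOct) : Prop :=
  ∃ x, x ∈ Im ∧ x ≠ 0 ∧ q x = 0 ∧ ℓ = Submodule.span ℝ {x}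

/-- An annihilator photon: a 2-dimensional totally isotropic subspace of `Im 𝕆'`
on which the cross product vanishes identically. -/
def IsAnnihilatorPhoton (ω : Submodule ℝ SplitOct) : Prop :=
  ω ≤ Im ∧ Module.finrank ℝ ω = 2 ∧ (∀ x ∈ ω, q x = 0) ∧
    ∀ x ∈ ω, ∀ y ∈ ω, cross x y = 0


set_option linter.dupNamespace false

/-- The split-octonion unit as an explicit pair. -/
def E : SplitOct := ((1 : ℍ[ℝ]), 0)

lemma mem_Im_iff_re {x : SplitOct} : x ∈ Im ↔ x.1.re = 0 := by
  rw [mem_Im_iff, conj, Prod.ext_iff]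
  simp [Quaternion.star_eq_neg]

lemma mul_E (x : SplitOct) : mul x E = x := by
  simp [mul, E, Prod.ext_iff]

lemma E_mul (x : SplitOct) : mul E x = x := by
  simp [mul, E, Prod.ext_iff]

lemma polar_E (x : SplitOct) : polar x E = x.1.re := by
  simp [polar_apply, E]

lemma polar_comm (x y : SplitOct) : polar x y = polar y x := by
  simp only [polar_apply, Quaternion.re_mul, Quaternion.re_star, Quaternion.imI_star,
    Quaternion.imJ_star, Quaternion.imK_star]
  ring

lemma polar_self (x : SplitOct) : polar x x = q x := by
  simp only [polar_apply, q_apply, Quaternion.re_mul, Quaternion.re_star, Quaternion.imI_star,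
    Quaternion.imJ_star, Quaternion.imK_star, Quaternion.normSq_def', Prod.fst, Prod.snd]
  ring

lemma q_add (x y : SplitOct) : q (x + y) = q x + q y + 2 * polar x y := by
  simp only [polar]; ring

lemma q_smul (t : ℝ) (x : SplitOct) : q (t • x) = t^2 * q x := by
  simp only [q_apply, Prod.smul_fst, Prod.smul_snd, Quaternion.normSq_def',
    QuaternionAlgebra.smul_mk, smul_eq_mul, Quaternion.re_smul, Quaternion.imI_smul,
    Quaternion.imJ_smul, Quaternion.imK_smul]
  ring

lemma polar_sub_right (x y y' : SplitOct) : polar x (y - y') = polar x y - polar x y' := by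
  simp only [polar_apply, Prod.fst_sub, Prod.snd_sub, star_sub, mul_sub, Quaternion.re_sub]
  ring

lemma polar_neg_right (x y : SplitOct) : polar x (-y) = -polar x y := by
  simp only [polar_apply, Prod.fst_neg, Prod.snd_neg, star_neg, mul_neg, Quaternion.re_neg]
  ring

lemma q_neg (x : SplitOct) : q (-x) = q x := by
  rw [← neg_one_smul ℝ x, q_smul]; ring
section Identities

lemma conj_mul (x y : SplitOct) : conj (mul x y) = mul (conj y) (conj x) := by
  simp only [mul, conj, Prod.mk.injEq, Quaternion.ext_iff, Quaternion.re_mul,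
    Quaternion.imI_mul, Quaternion.imJ_mul, Quaternion.imK_mul, Quaternion.re_star,
    Quaternion.imI_star, Quaternion.imJ_star, Quaternion.imK_star, Quaternion.re_add,
    Quaternion.imI_add, Quaternion.imJ_add, Quaternion.imK_add, QuaternionAlgebra.star_mk,
    QuaternionAlgebra.neg_mk, Quaternion.re_neg, Quaternion.imI_neg, Quaternion.imJ_neg,
    Quaternion.imK_neg, Prod.fst_neg, Prod.snd_neg]
  refine ⟨⟨?_,?_,?_,?_⟩,?_,?_,?_,?_⟩ <;> ring

lemma left_alt (x y : SplitOct) : mul x (mul x y) = mul (mul x x) y := by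
  simp only [mul, Prod.mk.injEq, Quaternion.ext_iff, Quaternion.re_mul,
    Quaternion.imI_mul, Quaternion.imJ_mul, Quaternion.imK_mul, Quaternion.re_star,
    Quaternion.imI_star, Quaternion.imJ_star, Quaternion.imK_star, Quaternion.re_add,
    Quaternion.imI_add, Quaternion.imJ_add, Quaternion.imK_add]
  refine ⟨⟨?_,?_,?_,?_⟩,?_,?_,?_,?_⟩ <;> ring

lemma right_alt (x y : SplitOct) : mul (mul y x) x = mul y (mul x x) := by
  simp only [mul, Prod.mk.injEq, Quaternion.ext_iff, Quaternion.re_mul,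
    Quaternion.imI_mul, Quaternion.imJ_mul, Quaternion.imK_mul, Quaternion.re_star,
    Quaternion.imI_star, Quaternion.imJ_star, Quaternion.imK_star, Quaternion.re_add,
    Quaternion.imI_add, Quaternion.imJ_add, Quaternion.imK_add]
  refine ⟨⟨?_,?_,?_,?_⟩,?_,?_,?_,?_⟩ <;> ring

lemma flex (x y : SplitOct) : mul (mul x y) x = mul x (mul y x) := by
  simp only [mul, Prod.mk.injEq, Quaternion.ext_iff, Quaternion.re_mul,
    Quaternion.imI_mul, Quaternion.imJ_mul, Quaternion.imK_mul, Quaternion.re_star,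
    Quaternion.imI_star, Quaternion.imJ_star, Quaternion.imK_star, Quaternion.re_add,
    Quaternion.imI_add, Quaternion.imJ_add, Quaternion.imK_add]
  refine ⟨⟨?_,?_,?_,?_⟩,?_,?_,?_,?_⟩ <;> ring

lemma moufang (x y z : SplitOct) :
    mul (mul x y) (mul z x) = mul x (mul (mul y z) x) := by
  simp only [mul, Prod.mk.injEq, Quaternion.ext_iff, Quaternion.re_mul,
    Quaternion.imI_mul, Quaternion.imJ_mul, Quaternion.imK_mul, Quaternion.re_star,
    Quaternion.imI_star, Quaternion.imJ_star, Quaternion.imK_star, Quaternion.re_add,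
    Quaternion.imI_add, Quaternion.imJ_add, Quaternion.imK_add]
  refine ⟨⟨?_,?_,?_,?_⟩,?_,?_,?_,?_⟩ <;> ring

lemma assoc_swap (x y z : SplitOct) :
    mul (mul x y) z + mul (mul y x) z = mul x (mul y z) + mul y (mul x z) := by
  simp only [mul, Prod.mk_add_mk, Prod.mk.injEq, Quaternion.ext_iff, Quaternion.re_mul,
    Quaternion.imI_mul, Quaternion.imJ_mul, Quaternion.imK_mul, Quaternion.re_star,
    Quaternion.imI_star, Quaternion.imJ_star, Quaternion.imK_star, Quaternion.re_add,
    Quaternion.imI_add, Quaternion.imJ_add, Quaternion.imK_add]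
  refine ⟨⟨?_,?_,?_,?_⟩,?_,?_,?_,?_⟩ <;> ring

lemma q_mul (x y : SplitOct) : q (mul x y) = q x * q y := by
  simp only [mul, q_apply, Quaternion.normSq_def', Quaternion.re_mul,
    Quaternion.imI_mul, Quaternion.imJ_mul, Quaternion.imK_mul, Quaternion.re_star,
    Quaternion.imI_star, Quaternion.imJ_star, Quaternion.imK_star, Quaternion.re_add,
    Quaternion.imI_add, Quaternion.imJ_add, Quaternion.imK_add]
  ring

lemma polar_mul_left (a x y : SplitOct) :
    polar (mul a x) y = polar x (mul (conj a) y) := by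
  simp only [mul, conj, polar_apply, Quaternion.re_mul,
    Quaternion.imI_mul, Quaternion.imJ_mul, Quaternion.imK_mul, Quaternion.re_star,
    Quaternion.imI_star, Quaternion.imJ_star, Quaternion.imK_star, Quaternion.re_add,
    Quaternion.imI_add, Quaternion.imJ_add, Quaternion.imK_add, QuaternionAlgebra.star_mk,
    QuaternionAlgebra.neg_mk, Prod.fst_neg, Prod.snd_neg, Quaternion.re_neg,
    Quaternion.imI_neg, Quaternion.imJ_neg, Quaternion.imK_neg]
  ring

lemma anticomm {x y : SplitOct} (hx : x ∈ Im) (hy : y ∈ Im) :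
    mul x y + mul y x = (-(2 * polar x y)) • E := by
  rw [mem_Im_iff_re] at hx hy
  simp only [hx, hy, mul, E, polar_apply, Prod.mk_add_mk, Prod.smul_mk, Prod.mk.injEq,
    Quaternion.ext_iff, Quaternion.re_mul,
    Quaternion.imI_mul, Quaternion.imJ_mul, Quaternion.imK_mul, Quaternion.re_star,
    Quaternion.imI_star, Quaternion.imJ_star, Quaternion.imK_star, Quaternion.re_add,
    Quaternion.imI_add, Quaternion.imJ_add, Quaternion.imK_add, Quaternion.re_smul,
    Quaternion.imI_smul, Quaternion.imJ_smul, Quaternion.imK_smul, smul_eq_mul, smul_zero,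
    Quaternion.re_zero, Quaternion.imI_zero, Quaternion.imJ_zero, Quaternion.imK_zero, Quaternion.re_one, Quaternion.imI_one, Quaternion.imJ_one, Quaternion.imK_one]
  refine ⟨⟨?_,?_,?_,?_⟩,?_,?_,?_,?_⟩ <;> ring

lemma cross_eq_mul_add {x y : SplitOct} (hx : x ∈ Im) (hy : y ∈ Im) :
    cross x y = mul x y + polar x y • E := by
  rw [mem_Im_iff_re] at hx hy
  simp only [hx, hy, cross, mul, conj, E, polar_apply, Prod.mk_add_mk, Prod.smul_mk, Prod.mk.injEq,
    Prod.fst_sub, Prod.snd_sub, Prod.mk_sub_mk, QuaternionAlgebra.star_mk,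
    QuaternionAlgebra.neg_mk, Quaternion.ext_iff, Quaternion.re_mul,
    Quaternion.imI_mul, Quaternion.imJ_mul, Quaternion.imK_mul, Quaternion.re_star,
    Quaternion.imI_star, Quaternion.imJ_star, Quaternion.imK_star, Quaternion.re_add,
    Quaternion.imI_add, Quaternion.imJ_add, Quaternion.imK_add, Quaternion.re_sub,
    Quaternion.imI_sub, Quaternion.imJ_sub, Quaternion.imK_sub, Quaternion.re_smul,
    Quaternion.imI_smul, Quaternion.imJ_smul, Quaternion.imK_smul, smul_eq_mul, smul_zero,
    Quaternion.re_zero, Quaternion.imI_zero, Quaternion.imJ_zero, Quaternion.imK_zero, Quaternion.re_one, Quaternion.imI_one, Quaternion.imJ_one, Quaternion.imK_one,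
    Quaternion.re_neg, Quaternion.imI_neg, Quaternion.imJ_neg, Quaternion.imK_neg]
  refine ⟨⟨?_,?_,?_,?_⟩,?_,?_,?_,?_⟩ <;> ring

end Identities
set_option linter.unusedSectionVars false
section Derived

lemma mul_neg_left (x y : SplitOct) : mul (-x) y = -(mul x y) := by
  rw [← neg_one_smul ℝ x, mul_smul_left, neg_one_smul]

lemma mul_neg_right (x y : SplitOct) : mul x (-y) = -(mul x y) := by
  rw [← neg_one_smul ℝ y, mul_smul_right, neg_one_smul]

lemma mul_self_im {x : SplitOct} (hx : x ∈ Im) : mul x x = (-(q x)) • E := by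
  have h := anticomm hx hx
  rw [polar_self] at h
  have h2 : (2:ℝ) • mul x x = (2:ℝ) • ((-(q x)) • E) := by
    rw [two_smul, h, smul_smul]; ring_nf
  exact smul_right_injective SplitOct two_ne_zero h2

lemma mul_comm_of_polar {x y : SplitOct} (hx : x ∈ Im) (hy : y ∈ Im)
    (h : polar x y = 0) : mul y x = -(mul x y) := by
  have h2 := anticomm hx hy
  rw [h] at h2
  simp only [mul_zero, neg_zero, zero_smul] at h2
  rw [add_comm] at h2
  exact eq_neg_of_add_eq_zero_left h2

lemma mul_im_of_polar {x y : SplitOct} (hx : x ∈ Im) (hy : y ∈ Im)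
    (h : polar x y = 0) : mul x y ∈ Im := by
  rw [mem_Im_iff, conj_mul, mem_Im_iff.mp hx, mem_Im_iff.mp hy, mul_neg_left, mul_neg_right,
    neg_neg, mul_comm_of_polar hx hy h]

lemma cross_eq_mul {x y : SplitOct} (hx : x ∈ Im) (hy : y ∈ Im)
    (h : polar x y = 0) : cross x y = mul x y := by
  rw [cross_eq_mul_add hx hy, h, zero_smul, add_zero]

lemma cross_self_im {x : SplitOct} (hx : x ∈ Im) : cross x x = 0 := by
  rw [cross_eq_mul_add hx hx, polar_self, mul_self_im hx, neg_smul, neg_add_cancel]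

lemma cross_anticomm {x y : SplitOct} (hx : x ∈ Im) (hy : y ∈ Im) :
    cross y x = -cross x y := by
  have h := anticomm hx hy
  have hyx : mul y x = -(mul x y) + (-(2 * polar x y)) • E := by
    rw [← h]; abel
  rw [cross_eq_mul_add hx hy, cross_eq_mul_add hy hx, polar_comm y x, hyx]
  module

section WFacts

variable {u v : SplitOct} (hu : u ∈ Im) (hv : v ∈ Im)
  (hqu : q u = 1) (hqv : q v = 1) (huv : polar u v = 0)

include hu hv huv in
lemma w_im : mul u v ∈ Im := mul_im_of_polar hu hv huv

include hqu hqv in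
lemma q_w : q (mul u v) = 1 := by rw [q_mul, hqu, hqv]; ring

include hu hv hqu in
lemma polar_wu : polar (mul u v) u = 0 := by
  rw [polar_mul_left, mem_Im_iff.mp hu, mul_neg_left, mul_self_im hu, hqu, polar_neg_right,
    polar_smul_right, polar_E, mem_Im_iff_re.mp hv]
  ring

include hu hv in
lemma polar_wv : polar (mul u v) v = 0 := by
  have h : polar (mul u v) v = -(polar (mul u v) v) := by
    conv_lhs => rw [polar_mul_left, mem_Im_iff.mp hu, mul_neg_left, polar_neg_right,
      polar_comm v (mul u v)]
  linarith

include hu hqu in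
lemma mul_uw : mul u (mul u v) = -v := by
  rw [left_alt, mul_self_im hu, hqu, mul_smul_left, E_mul, neg_smul, one_smul]

include hu hv hqu huv in
lemma mul_wu : mul (mul u v) u = v := by
  have h := mul_comm_of_polar hu (w_im hu hv huv)
    (by rw [polar_comm]; exact polar_wu hu hv hqu)
  rw [h, mul_uw hu hqu, neg_neg]

include hv hqv in
lemma mul_wv : mul (mul u v) v = -u := by
  rw [right_alt, mul_self_im hv, hqv, mul_smul_right, mul_E, neg_smul, one_smul]

include hu hv hqv huv in
lemma mul_vw : mul v (mul u v) = u := by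
  have h := mul_comm_of_polar (w_im hu hv huv) hv (polar_wv hu hv)
  rw [h, mul_wv hv hqv, neg_neg]

end WFacts

section ZFacts

variable {u v z : SplitOct} (hu : u ∈ Im) (hv : v ∈ Im) (hz : z ∈ Im)
  (hqu : q u = 1) (hqv : q v = 1) (huv : polar u v = 0)
  (hzu : polar z u = 0) (hzv : polar z v = 0) (hzw : polar z (mul u v) = 0)

include hu hv hz huv hzw in
lemma m_im : mul (mul u v) z ∈ Im :=
  mul_im_of_polar (w_im hu hv huv) hz (by rw [polar_comm]; exact hzw)

include hqu hqv in
lemma q_m : q (mul (mul u v) z) = q z := by rw [q_mul, q_w hqu hqv, one_mul]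

include hu hv hqu hqv huv hzv in
lemma polar_mu : polar (mul (mul u v) z) u = 0 := by
  rw [polar_mul_left, mem_Im_iff.mp (w_im hu hv huv), mul_neg_left, polar_neg_right,
    mul_wu hu hv hqu huv, hzv, neg_zero]

include hu hv hqv huv hzu in
lemma polar_mv : polar (mul (mul u v) z) v = 0 := by
  rw [polar_mul_left, mem_Im_iff.mp (w_im hu hv huv), mul_neg_left, polar_neg_right,
    mul_wv hv hqv, polar_neg_right, hzu, neg_zero, neg_zero]

include hu hv huv in
lemma polar_mz : polar (mul (mul u v) z) z = 0 := by
  have h : polar (mul (mul u v) z) z = -(polar (mul (mul u v) z) z) := by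
    conv_lhs => rw [polar_mul_left, mem_Im_iff.mp (w_im hu hv huv), mul_neg_left,
      polar_neg_right, polar_comm z (mul (mul u v) z)]
  linarith

include hu hv hz hqu hqv huv hzu hzv hzw in
lemma mul_zm : mul z (mul (mul u v) z) = q z • (mul u v) := by
  have hwz : polar (mul u v) z = 0 := by rw [polar_comm]; exact hzw
  have hmzw : mul z (mul u v) = -(mul (mul u v) z) := 
    mul_comm_of_polar (w_im hu hv huv) hz hwz
  calc mul z (mul (mul u v) z) = mul (mul z (mul u v)) z := (flex z (mul u v)).symm
    _ = -(mul (mul (mul u v) z) z) := by rw [hmzw, mul_neg_left]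
    _ = -(mul (mul u v) (mul z z)) := by rw [right_alt]
    _ = q z • (mul u v) := by
        rw [mul_self_im hz, mul_smul_right, mul_E, neg_smul, neg_neg]

include hu hv hz hqu hqv huv hzu hzv hzw in
lemma mul_um : mul u (mul (mul u v) z) = mul v z := by
  have h1 := assoc_swap u (mul u v) z
  rw [mul_uw hu hqu, mul_wu hu hv hqu huv, mul_neg_left, neg_add_cancel] at h1
  -- h1 : 0 = mul u (mul (mul u v) z) + mul (mul u v) (mul u z)
  have huz : mul u z = -(mul z u) := mul_comm_of_polar hz hu hzu
  have hsim : mul v z ∈ Im := mul_im_of_polar hv hz (by rw [polar_comm]; exact hzv)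
  have hsu : polar (mul v z) u = 0 := by
    rw [polar_mul_left, mem_Im_iff.mp hv, mul_neg_left, polar_neg_right]
    have hvu : mul v u = -(mul u v) := mul_comm_of_polar hu hv huv
    rw [hvu, polar_neg_right, hzw, neg_zero, neg_zero]
  have hus : mul (mul v z) u = -(mul u (mul v z)) :=
    mul_comm_of_polar hu hsim (by rw [polar_comm]; exact hsu)
  have h2 : mul (mul u v) (mul u z) = -(mul v z) := by
    rw [huz, mul_neg_right, moufang u v z, hus, mul_neg_right, left_alt, mul_self_im hu, hqu,
      mul_smul_left, E_mul]
    module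
  rw [h2] at h1
  have h1' : mul u (mul (mul u v) z) - mul v z = 0 := by rw [sub_eq_add_neg]; exact h1.symm
  exact sub_eq_zero.mp h1'

include hu hv hz hqu hqv huv hzu hzv hzw in
lemma key_cross : cross (u + z) (v + mul (mul u v) z) = (1 + q z) • mul u v := by
  have hwz : polar (mul u v) z = 0 := by rw [polar_comm]; exact hzw
  have hmim := m_im hu hv hz huv hzw
  rw [cross_add_left, cross_add_right, cross_add_right]
  rw [cross_eq_mul hu hv huv]
  rw [cross_eq_mul hu hmim (by rw [polar_comm]; exact polar_mu hu hv hqu hqv huv hzv)]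
  rw [cross_eq_mul hz hv hzv]
  rw [cross_eq_mul hz hmim (by rw [polar_comm]; exact polar_mz hu hv huv)]
  rw [mul_um hu hv hz hqu hqv huv hzu hzv hzw, mul_zm hu hv hz hqu hqv huv hzu hzv hzw]
  have hvz : mul z v = -(mul v z) := mul_comm_of_polar hv hz (by rw [polar_comm]; exact hzv)
  rw [hvz, add_smul, one_smul]
  abel

end ZFacts

end Derived
section LinAlg

lemma q_zero : q 0 = 0 := by simp [q_apply]

/-- The projection to the imaginary part of the first quaternion component. -/
def imProj : SplitOct →ₗ[ℝ] ℝ × ℝ × ℝ where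
  toFun y := (y.1.imI, y.1.imJ, y.1.imK)
  map_add' a b := by
    simp [Prod.fst_add, Quaternion.imI_add, Quaternion.imJ_add, Quaternion.imK_add]
  map_smul' c a := by
    simp [Prod.smul_fst, Quaternion.imI_smul, Quaternion.imJ_smul, Quaternion.imK_smul]

lemma finrank_span_pair_eq_two {a b : SplitOct}
    (h : ∀ s t : ℝ, s • a + t • b = 0 → s = 0 ∧ t = 0) :
    Module.finrank ℝ (Submodule.span ℝ ({a, b} : Set SplitOct)) = 2 := by
  have hli : LinearIndependent ℝ ![a, b] := LinearIndependent.pair_iff.mpr h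
  have hr : Set.range ![a, b] = {a, b} := by
    simp only [Matrix.range_cons, Matrix.range_empty, Set.union_empty, Set.union_singleton]
    exact Set.pair_comm b a
  have hfr := finrank_span_eq_card hli
  rw [hr] at hfr
  simpa using hfr

lemma orth_neg {P : Submodule ℝ SplitOct} (hPIm : P ≤ Im)
    (hPdim : Module.finrank ℝ P = 3)
    (hPpos : ∀ y ∈ P, y ≠ 0 → 0 < q y) {x : SplitOct} (hx : x ∈ orth P) (hx0 : x ≠ 0) :
    q x < 0 := by
  by_contra hqx
  push_neg at hqx
  have hxP : x ∉ P := by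
    intro hxP
    have h1 : q x = 0 := by rw [← polar_self]; exact hx.2 x hxP
    exact absurd h1 (ne_of_gt (hPpos x hxP hx0))
  have hinf : P ⊓ (ℝ ∙ x) = ⊥ := by
    rw [Submodule.eq_bot_iff]
    intro y hy
    rw [Submodule.mem_inf] at hy
    obtain ⟨hyP, hyS⟩ := hy
    rw [Submodule.mem_span_singleton] at hyS
    obtain ⟨c, rfl⟩ := hyS
    rcases eq_or_ne c 0 with rfl | hc
    · simp
    · exact absurd ((Submodule.smul_mem_iff P hc).mp hyP) hxP
  have hfr : Module.finrank ℝ ↥(P ⊔ (ℝ ∙ x)) = 4 := by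
    have h := Submodule.finrank_sup_add_finrank_inf_eq P (ℝ ∙ x)
    rw [hinf, hPdim, finrank_span_singleton hx0] at h
    simpa using h
  have hUq : ∀ y ∈ P ⊔ (ℝ ∙ x), 0 ≤ q y := by
    intro y hy
    rw [Submodule.mem_sup] at hy
    obtain ⟨p, hp, s, hs, rfl⟩ := hy
    rw [Submodule.mem_span_singleton] at hs
    obtain ⟨c, rfl⟩ := hs
    have hpx : polar p (c • x) = 0 := by
      rw [polar_smul_right, polar_comm, hx.2 p hp, mul_zero]
    rw [q_add, q_smul, hpx]
    have hqp : 0 ≤ q p := by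
      rcases eq_or_ne p 0 with rfl | hp0
      · rw [q_zero]
      · exact le_of_lt (hPpos p hp hp0)
    nlinarith [sq_nonneg c]
  have hUIm : P ⊔ (ℝ ∙ x) ≤ Im := by
    refine sup_le hPIm ?_
    rw [Submodule.span_singleton_le_iff_mem]
    exact hx.1
  have hker : ∀ m : ↥(P ⊔ (ℝ ∙ x)), imProj.comp (P ⊔ (ℝ ∙ x)).subtype m = 0 → m = 0 := by
    rintro ⟨y, hy⟩ hfy
    have h1 : y.1.imI = 0 ∧ y.1.imJ = 0 ∧ y.1.imK = 0 := by
      have := congrArg Prod.fst hfy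
      have h2 := congrArg (fun p => p.2.1) hfy
      have h3 := congrArg (fun p => p.2.2) hfy
      exact ⟨this, h2, h3⟩
    have hre : y.1.re = 0 := mem_Im_iff_re.mp (hUIm hy)
    have hy1 : y.1 = 0 := by
      apply Quaternion.ext <;>
        simp [hre, h1.1, h1.2.1, h1.2.2]
    have hqy : q y ≤ 0 := by
      rw [q_apply, hy1]
      simp [Quaternion.normSq_nonneg]
    have hqy0 : q y = 0 := le_antisymm hqy (hUq y hy)
    have hy2 : y.2 = 0 := by
      rw [q_apply, hy1] at hqy0
      simp only [map_zero, zero_sub, neg_eq_zero] at hqy0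
      exact Quaternion.normSq_eq_zero.mp hqy0
    have : y = 0 := Prod.ext hy1 hy2
    exact Subtype.ext this
  have hinj : Function.Injective (imProj.comp (P ⊔ (ℝ ∙ x)).subtype) :=
    LinearMap.ker_eq_bot.mp ((Submodule.eq_bot_iff _).mpr fun m hm => hker m hm)
  have hle := LinearMap.finrank_le_finrank_of_injective hinj
  have h3 : Module.finrank ℝ (ℝ × ℝ × ℝ) = 3 := by
    simp [Module.finrank_prod]
  rw [hfr, h3] at hle
  omega

end LinAlg

set_option maxHeartbeats 2000000

/-- Annihilator photons projecting onto a fixed 2-plane `W` of a spacelike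
cross-closed 3-plane `P` are exactly the planes `ω_z = span {u+z, v+(uv)z}` for a unique
`z ∈ P⊥` with `q z = -1`, where `(u,v)` is a `q`-orthonormal basis of `W`. -/
theorem annihilator_photons_over_plane
    (P W : Submodule ℝ SplitOct) (hPIm : P ≤ Im)
    (hPdim : Module.finrank ℝ P = 3)
    (hPpos : ∀ v ∈ P, v ≠ 0 → 0 < q v)
    (hPcross : ∀ u ∈ P, ∀ v ∈ P, cross u v ∈ P)
    (hWP : W ≤ P) (hWdim : Module.finrank ℝ W = 2)
    (u v : SplitOct) (hu : u ∈ W) (hv : v ∈ W)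
    (hqu : q u = 1) (hqv : q v = 1) (huv : polar u v = 0)
    (hbasis : Submodule.span ℝ {u, v} = W) :
    (∀ z : SplitOct, z ∈ orth P → q z = -1 →
      IsAnnihilatorPhoton (Submodule.span ℝ {u + z, v + mul (mul u v) z}) ∧
        {p : SplitOct | p ∈ P ∧
            ∃ y ∈ Submodule.span ℝ {u + z, v + mul (mul u v) z}, y - p ∈ orth P}
          = (W : Set SplitOct)) ∧
    ∀ ω : Submodule ℝ SplitOct, IsAnnihilatorPhoton ω →
      {p : SplitOct | p ∈ P ∧ ∃ y ∈ ω, y - p ∈ orth P} = (W : Set SplitOct) →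
      ∃! z : SplitOct, z ∈ orth P ∧ q z = -1 ∧
        ω = Submodule.span ℝ {u + z, v + mul (mul u v) z} := by
  have huP : u ∈ P := hWP hu
  have hvP : v ∈ P := hWP hv
  have huIm : u ∈ Im := hPIm huP
  have hvIm : v ∈ Im := hPIm hvP
  have hwIm : mul u v ∈ Im := w_im huIm hvIm huv
  have hwP : mul u v ∈ P := by
    have h := hPcross u huP v hvP
    rwa [cross_eq_mul huIm hvIm huv] at h
  -- multiplication by `w` maps `orth P` to itself
  have mOrth : ∀ z ∈ orth P, mul (mul u v) z ∈ orth P := by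
    intro z hz
    refine ⟨m_im huIm hvIm hz.1 huv (hz.2 _ hwP), ?_⟩
    intro p hp
    have hpIm : p ∈ Im := hPIm hp
    rw [polar_mul_left, mem_Im_iff.mp hwIm, mul_neg_left, polar_neg_right]
    have hcr : mul (mul u v) p = cross (mul u v) p - polar (mul u v) p • E := by
      rw [cross_eq_mul_add hwIm hpIm]; module
    rw [hcr, polar_sub_right, polar_smul_right, polar_E, mem_Im_iff_re.mp hz.1,
      hz.2 _ (hPcross _ hwP p hp), mul_zero, sub_zero, neg_zero]
  refine ⟨?_, ?_⟩
  · -- Part (i)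
    intro z hzO hqz
    have hzIm : z ∈ Im := hzO.1
    have hzu : polar z u = 0 := hzO.2 u huP
    have hzv : polar z v = 0 := hzO.2 v hvP
    have hzw : polar z (mul u v) = 0 := hzO.2 _ hwP
    have hmIm : mul (mul u v) z ∈ Im := m_im huIm hvIm hzIm huv hzw
    have hmO : mul (mul u v) z ∈ orth P := mOrth z hzO
    have hmu : polar (mul (mul u v) z) u = 0 := hmO.2 u huP
    have hmv : polar (mul (mul u v) z) v = 0 := hmO.2 v hvP
    have hmz : polar (mul (mul u v) z) z = 0 := polar_mz huIm hvIm huv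
    have haIm : u + z ∈ Im := Im.add_mem huIm hzIm
    have hbIm : v + mul (mul u v) z ∈ Im := Im.add_mem hvIm hmIm
    have hqa : q (u + z) = 0 := by
      rw [q_add, hqu, hqz, polar_comm u z, hzu]; ring
    have hqm : q (mul (mul u v) z) = -1 := by rw [q_m hqu hqv, hqz]
    have hqb : q (v + mul (mul u v) z) = 0 := by
      rw [q_add, hqv, hqm, polar_comm v (mul (mul u v) z), hmv]; ring
    have hpab : polar (u + z) (v + mul (mul u v) z) = 0 := by
      rw [polar_add_left, polar_add_right, polar_add_right, huv,
        polar_comm u (mul (mul u v) z), hmu, hzv, polar_comm z (mul (mul u v) z), hmz]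
      ring
    have hcab : cross (u + z) (v + mul (mul u v) z) = 0 := by
      rw [key_cross huIm hvIm hzIm hqu hqv huv hzu hzv hzw, hqz]
      norm_num
    have pau : polar (u + z) u = 1 := by rw [polar_add_left, polar_self, hqu, hzu]; ring
    have pav : polar (u + z) v = 0 := by rw [polar_add_left, huv, hzv]; ring
    have pbu : polar (v + mul (mul u v) z) u = 0 := by
      rw [polar_add_left, polar_comm v u, huv, hmu]; ring
    have pbv : polar (v + mul (mul u v) z) v = 1 := by
      rw [polar_add_left, polar_self, hqv, hmv]; ring
    constructor
    · refine ⟨?_, ?_, ?_, ?_⟩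
      · rw [Submodule.span_le]
        intro y hy
        simp only [Set.mem_insert_iff, Set.mem_singleton_iff] at hy
        rcases hy with rfl | rfl
        · exact haIm
        · exact hbIm
      · refine finrank_span_pair_eq_two ?_
        intro s t hst
        have e1 : polar (s • (u + z) + t • (v + mul (mul u v) z)) u = 0 := by
          rw [hst, polar_zero_left]
        have e2 : polar (s • (u + z) + t • (v + mul (mul u v) z)) v = 0 := by
          rw [hst, polar_zero_left]
        rw [polar_add_left, polar_smul_left, polar_smul_left, pau, pbu] at e1
        rw [polar_add_left, polar_smul_left, polar_smul_left, pav, pbv] at e2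
        constructor <;> linarith
      · intro x hx
        rw [Submodule.mem_span_pair] at hx
        obtain ⟨s, t, rfl⟩ := hx
        rw [q_add, q_smul, q_smul, polar_smul_left, polar_smul_right, hqa, hqb, hpab]
        ring
      · intro x hx y hy
        rw [Submodule.mem_span_pair] at hx hy
        obtain ⟨s, t, rfl⟩ := hx
        obtain ⟨s', t', rfl⟩ := hy
        have hba : cross (v + mul (mul u v) z) (u + z) = 0 := by
          rw [cross_anticomm haIm hbIm, hcab, neg_zero]
        rw [cross_add_left, cross_smul_left, cross_smul_left, cross_add_right,
          cross_add_right, cross_smul_right, cross_smul_right, cross_smul_right,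
          cross_smul_right, hcab, hba, cross_self_im haIm, cross_self_im hbIm]
        simp
    · ext p
      simp only [Set.mem_setOf_eq, SetLike.mem_coe]
      constructor
      · rintro ⟨hpP, y, hy, hyO⟩
        rw [Submodule.mem_span_pair] at hy
        obtain ⟨s, t, rfl⟩ := hy
        have hr : (s • (u + z) + t • (v + mul (mul u v) z)) - (s • u + t • v) ∈ orth P := by
          have he : (s • (u + z) + t • (v + mul (mul u v) z)) - (s • u + t • v)
              = s • z + t • (mul (mul u v) z) := by module
          rw [he]
          exact Submodule.add_mem _ (Submodule.smul_mem _ s hzO) (Submodule.smul_mem _ t hmO)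
        have hdiff : p - (s • u + t • v) ∈ orth P := by
          have he : p - (s • u + t • v)
              = ((s • (u + z) + t • (v + mul (mul u v) z)) - (s • u + t • v))
                - ((s • (u + z) + t • (v + mul (mul u v) z)) - p) := by module
          rw [he]
          exact Submodule.sub_mem _ hr hyO
        have hdiffP : p - (s • u + t • v) ∈ P :=
          Submodule.sub_mem P hpP
            (Submodule.add_mem P (Submodule.smul_mem P s huP) (Submodule.smul_mem P t hvP))
        have h0 : p - (s • u + t • v) = 0 := by
          by_contra hne
          have h1 := hPpos _ hdiffP hne
          have h2 : q (p - (s • u + t • v)) = 0 := by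
            rw [← polar_self]; exact hdiff.2 _ hdiffP
          linarith
        have hp' : p = s • u + t • v := by rwa [sub_eq_zero] at h0
        rw [hp']
        exact W.add_mem (W.smul_mem s hu) (W.smul_mem t hv)
      · intro hpW
        have hp' : p ∈ Submodule.span ℝ {u, v} := by rw [hbasis]; exact hpW
        rw [Submodule.mem_span_pair] at hp'
        obtain ⟨s, t, rfl⟩ := hp'
        refine ⟨Submodule.add_mem P (Submodule.smul_mem P s huP) (Submodule.smul_mem P t hvP),
          s • (u + z) + t • (v + mul (mul u v) z),
          Submodule.mem_span_pair.mpr ⟨s, t, rfl⟩, ?_⟩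
        have he : (s • (u + z) + t • (v + mul (mul u v) z)) - (s • u + t • v)
            = s • z + t • (mul (mul u v) z) := by module
        rw [he]
        exact Submodule.add_mem _ (Submodule.smul_mem _ s hzO) (Submodule.smul_mem _ t hmO)
  · -- Part (ii)
    intro ω hω hproj
    obtain ⟨hωIm, hωdim, hωq, hωcross⟩ := hω
    have huW : u ∈ {p : SplitOct | p ∈ P ∧ ∃ y ∈ ω, y - p ∈ orth P} := by
      rw [hproj]; exact hu
    have hvW : v ∈ {p : SplitOct | p ∈ P ∧ ∃ y ∈ ω, y - p ∈ orth P} := by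
      rw [hproj]; exact hv
    obtain ⟨-, y₁, hy₁ω, hzO⟩ := huW
    obtain ⟨-, y₂, hy₂ω, hz'O⟩ := hvW
    have e1 : y₁ = u + (y₁ - u) := by abel
    have e2 : y₂ = v + (y₂ - v) := by abel
    have hzIm : y₁ - u ∈ Im := hzO.1
    have hz'Im : y₂ - v ∈ Im := hz'O.1
    have hzu : polar (y₁ - u) u = 0 := hzO.2 u huP
    have hzv : polar (y₁ - u) v = 0 := hzO.2 v hvP
    have hzw : polar (y₁ - u) (mul u v) = 0 := hzO.2 _ hwP
    have hz'u : polar (y₂ - v) u = 0 := hz'O.2 u huP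
    have hz'v : polar (y₂ - v) v = 0 := hz'O.2 v hvP
    have hqy₁ : q y₁ = 0 := hωq y₁ hy₁ω
    have hqy₂ : q y₂ = 0 := hωq y₂ hy₂ω
    have hqz : q (y₁ - u) = -1 := by
      rw [e1, q_add, hqu, polar_comm u (y₁ - u), hzu] at hqy₁
      linarith
    have hp12 : polar y₁ y₂ = 0 := by
      have h := hωq (y₁ + y₂) (Submodule.add_mem ω hy₁ω hy₂ω)
      rw [q_add, hqy₁, hqy₂] at h
      linarith
    have hpzz' : polar (y₁ - u) (y₂ - v) = 0 := by
      have h : polar y₁ y₂ = polar (u + (y₁ - u)) (v + (y₂ - v)) := by rw [← e1, ← e2]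
      rw [polar_add_left, polar_add_right, polar_add_right, huv,
        polar_comm u (y₂ - v), hz'u, hzv] at h
      rw [hp12] at h
      linarith
    have hcross12 : cross y₁ y₂ = 0 := hωcross y₁ hy₁ω y₂ hy₂ω
    have hmIm : mul (mul u v) (y₁ - u) ∈ Im := m_im huIm hvIm hzIm huv hzw
    have hmO : mul (mul u v) (y₁ - u) ∈ orth P := mOrth _ hzO
    have hkey : cross (u + (y₁ - u)) (v + mul (mul u v) (y₁ - u)) = 0 := by
      rw [key_cross huIm hvIm hzIm hqu hqv huv hzu hzv hzw, hqz]
      norm_num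
    have hxO : (y₂ - v) - mul (mul u v) (y₁ - u) ∈ orth P :=
      Submodule.sub_mem _ hz'O hmO
    have hxIm : (y₂ - v) - mul (mul u v) (y₁ - u) ∈ Im := hxO.1
    have hcx : cross (u + (y₁ - u)) ((y₂ - v) - mul (mul u v) (y₁ - u)) = 0 := by
      have e3 : v + (y₂ - v) = (v + mul (mul u v) (y₁ - u))
          + ((y₂ - v) - mul (mul u v) (y₁ - u)) := by abel
      have e4 : cross y₁ y₂ = cross (u + (y₁ - u)) (v + (y₂ - v)) := by rw [← e1, ← e2]
      rw [e4, e3, cross_add_right, hkey, zero_add] at hcross12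
      exact hcross12
    have hpux : polar u ((y₂ - v) - mul (mul u v) (y₁ - u)) = 0 := by
      rw [polar_comm]; exact hxO.2 u huP
    have hpzx : polar (y₁ - u) ((y₂ - v) - mul (mul u v) (y₁ - u)) = 0 := by
      rw [polar_sub_right, hpzz']
      rw [polar_comm (y₁ - u) (mul (mul u v) (y₁ - u)), polar_mz huIm hvIm huv]
      ring
    have hsum : mul u ((y₂ - v) - mul (mul u v) (y₁ - u))
        + mul (y₁ - u) ((y₂ - v) - mul (mul u v) (y₁ - u)) = 0 := by
      rw [cross_add_left, cross_eq_mul huIm hxIm hpux, cross_eq_mul hzIm hxIm hpzx] at hcx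
      exact hcx
    have hqX : q ((y₂ - v) - mul (mul u v) (y₁ - u)) = 0 := by
      have hux_eq : mul u ((y₂ - v) - mul (mul u v) (y₁ - u))
          = -(mul (y₁ - u) ((y₂ - v) - mul (mul u v) (y₁ - u))) :=
        eq_neg_of_add_eq_zero_left hsum
      have h1 : q (mul u ((y₂ - v) - mul (mul u v) (y₁ - u)))
          = q ((y₂ - v) - mul (mul u v) (y₁ - u)) := by rw [q_mul, hqu, one_mul]
      have h2 : q (mul (y₁ - u) ((y₂ - v) - mul (mul u v) (y₁ - u)))
          = -(q ((y₂ - v) - mul (mul u v) (y₁ - u))) := by rw [q_mul, hqz]; ring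
      rw [hux_eq, q_neg, h2] at h1
      linarith
    have hX0 : (y₂ - v) - mul (mul u v) (y₁ - u) = 0 := by
      by_contra hne
      exact absurd hqX (ne_of_lt (orth_neg hPIm hPdim hPpos hxO hne))
    have hy₂eq : y₂ = v + mul (mul u v) (y₁ - u) := by
      have h := sub_eq_zero.mp hX0
      rw [e2, h]
    -- pairing coefficients
    have p1u : polar y₁ u = 1 := by
      rw [e1, polar_add_left, polar_self, hqu, hzu]; ring
    have p1v : polar y₁ v = 0 := by
      rw [e1, polar_add_left, huv, hzv]; ring
    have p2u : polar y₂ u = 0 := by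
      rw [e2, polar_add_left, polar_comm v u, huv, hz'u]; ring
    have p2v : polar y₂ v = 1 := by
      rw [e2, polar_add_left, polar_self, hqv, hz'v]; ring
    have hspanle : Submodule.span ℝ {y₁, y₂} ≤ ω := by
      rw [Submodule.span_le]
      intro y hy
      simp only [Set.mem_insert_iff, Set.mem_singleton_iff] at hy
      rcases hy with rfl | rfl
      · exact hy₁ω
      · exact hy₂ω
    have hfr2 : Module.finrank ℝ (Submodule.span ℝ ({y₁, y₂} : Set SplitOct)) = 2 := by
      refine finrank_span_pair_eq_two ?_
      intro s t hst
      have f1 : polar (s • y₁ + t • y₂) u = 0 := by rw [hst, polar_zero_left]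
      have f2 : polar (s • y₁ + t • y₂) v = 0 := by rw [hst, polar_zero_left]
      rw [polar_add_left, polar_smul_left, polar_smul_left, p1u, p2u] at f1
      rw [polar_add_left, polar_smul_left, polar_smul_left, p1v, p2v] at f2
      constructor <;> linarith
    have hωeq : Submodule.span ℝ ({y₁, y₂} : Set SplitOct) = ω :=
      Submodule.eq_of_le_of_finrank_le hspanle (by rw [hωdim, hfr2])
    refine ⟨y₁ - u, ⟨hzO, hqz, ?_⟩, ?_⟩
    · rw [← hωeq, show u + (y₁ - u) = y₁ from e1.symm, ← hy₂eq]
    · rintro z₁ ⟨hz₁O, hqz₁, hωz₁⟩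
      have hmem : u + z₁ ∈ ω := by
        rw [hωz₁]
        exact Submodule.subset_span (Set.mem_insert _ _)
      rw [← hωeq, Submodule.mem_span_pair] at hmem
      obtain ⟨s, t, hst⟩ := hmem
      have g1 : polar (s • y₁ + t • y₂) u = 1 := by
        rw [hst, polar_add_left, polar_self, hqu, hz₁O.2 u huP]; ring
      have g2 : polar (s • y₁ + t • y₂) v = 0 := by
        rw [hst, polar_add_left, huv, hz₁O.2 v hvP]; ring
      rw [polar_add_left, polar_smul_left, polar_smul_left, p1u, p2u] at g1
      rw [polar_add_left, polar_smul_left, polar_smul_left, p1v, p2v] at g2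
      have hs : s = 1 := by linarith
      have ht : t = 0 := by linarith
      rw [hs, ht, one_smul, zero_smul, add_zero] at hst
      rw [hst]
      abel

end SplitOct
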